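/- arXiv:math/0511454 — 2 statements merged into one kernel-verified Lean document; each statement's English description precedes it below -/
import Mathlib

section
/- Suppose r_1, r_2, …, r_n ∈ ℚ[G] satisfy r_i P_i ∈ ℤ[G] for every i, and r_i(e − p_j) − r_j(e − p_i) ∈ ℤ[G] for all i, j = 1, 2, …, n. Then there exists x ∈ ℚ[G] such that r_i − x(e − p_i) ∈ ℤ[G] for all i = 1, 2, …, n. -/
open MonoidAlgebra Finset

/-- The integral group ring ℤ[G]. -/
noncomputable abbrev ZG (G : Type) [CommGroup G] := MonoidAlgebra ℤ G

/-- The rational group ring ℚ[G]. -/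
noncomputable abbrev QG (G : Type) [CommGroup G] := MonoidAlgebra ℚ G

/-- The canonical embedding ℤ[G] → ℚ[G]. -/
noncomputable def toQ (G : Type) [CommGroup G] : ZG G →ₐ[ℤ] QG G :=
  MonoidAlgebra.lift ℤ (QG G) G (MonoidAlgebra.of ℚ G)

/-- "x ∈ ℤ[G]" for an element x of ℚ[G]. -/
def MemZG (G : Type) [CommGroup G] (x : QG G) : Prop := ∃ z : ZG G, toQ G z = x

/-- G = ℤ_{m₁} × ℤ_{m₂} × ⋯ × ℤ_{mₙ}, written multiplicatively. -/
abbrev Gr {n : ℕ} (m : Fin n → ℕ) : Type := (i : Fin n) → Multiplicative (ZMod (m i))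

/-- pᵢ, the generator of the i-th factor of G. -/
def pgen {n : ℕ} (m : Fin n → ℕ) (i : Fin n) : Gr m :=
  Pi.mulSingle i (Multiplicative.ofAdd 1)

/-- Pᵢ = e + pᵢ + pᵢ² + ⋯ + pᵢ^{mᵢ−1} ∈ ℤ[G]. -/
noncomputable def Pel {n : ℕ} (m : Fin n → ℕ) (i : Fin n) : ZG (Gr m) :=
  ∑ k ∈ Finset.range (m i), (MonoidAlgebra.of ℤ (Gr m) (pgen m i)) ^ k

/-- Qᵢ = ∏_{j ≠ i} Pⱼ ∈ ℤ[G]. -/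
noncomputable def Qel {n : ℕ} (m : Fin n → ℕ) (i : Fin n) : ZG (Gr m) :=
  ∏ j ∈ Finset.univ.erase i, Pel m j

/-- N = Σ_{g ∈ G} g ∈ ℤ[G]. -/
noncomputable def Nel {n : ℕ} (m : Fin n → ℕ) [∀ i, NeZero (m i)] : ZG (Gr m) :=
  ∑ g : Gr m, MonoidAlgebra.of ℤ (Gr m) g

/- ### Auxiliary combinatorial lemmas -/

lemma cyclic_solve {A : Type} [AddCommGroup A] {G : Type} [AddCommGroup G] (e : G) (m : ℕ)
    (hm : 1 ≤ m) (horder : ∀ k : ℤ, k • e = 0 ↔ (m : ℤ) ∣ k)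
    (d : G → A) (hline : ∀ g, ∑ k ∈ Finset.range m, d (g + k • e) = 0) :
    ∃ b : G → A, ∀ g, d g = b (g + e) - b g := by
  classical
  set H := AddSubgroup.zmultiples e with hH
  have hmem : ∀ x : G, x ∈ H ↔ ∃ k : ℤ, k • e = x := fun x => AddSubgroup.mem_zmultiples_iff
  let s : G → G := fun g => (QuotientAddGroup.mk (s := H) g).out
  have hs : ∀ g : G, (QuotientAddGroup.mk (s := H) (s g)) = QuotientAddGroup.mk (s := H) g :=
    fun g => Quotient.out_eq' _
  have uniq : ∀ (x : G) (k k' : ℕ), k < m → k' < m → x + k • e = x + k' • e → k = k' := by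
    intro x k k' hk hk' hEq
    have h1 : (k : ℤ) • e = (k' : ℤ) • e := by
      have := add_left_cancel hEq
      simpa [natCast_zsmul] using this
    have h2 : ((k : ℤ) - k') • e = 0 := by rw [sub_smul, h1, sub_self]
    have h3 : (m : ℤ) ∣ (k : ℤ) - k' := (horder _).mp h2
    have h4 : ((k : ℤ) - k') = 0 := Int.eq_zero_of_abs_lt_dvd h3 (by
      rw [abs_lt]; constructor <;> omega)
    omega
  have exists_k : ∀ g : G, ∃ k : ℕ, k < m ∧ g = s g + k • e := by
    intro g
    have hmemg : -(s g) + g ∈ H := QuotientAddGroup.eq.mp (hs g)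
    obtain ⟨c, hc⟩ := (hmem _).mp hmemg
    have h0 : (0 : ℤ) < m := by exact_mod_cast hm
    have hlt : c % m < m := Int.emod_lt_of_pos c h0
    have hnn : (0 : ℤ) ≤ c % m := Int.emod_nonneg c (by omega)
    refine ⟨(c % m).toNat, by omega, ?_⟩
    have hcast : (((c % m).toNat : ℤ)) = c % m := Int.toNat_of_nonneg hnn
    have hdvd : (m : ℤ) ∣ c - c % m := Int.dvd_self_sub_of_emod_eq rfl
    have hz : (c - c % m) • e = 0 := (horder _).mpr hdvd
    have hce : c • e = (c % m) • e := by
      conv_lhs => rw [show c = c % m + (c - c % m) by ring]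
      rw [add_smul, hz, add_zero]
    rw [← natCast_zsmul, hcast, ← hce, hc]
    abel
  choose κ hκlt hκg using exists_k
  refine ⟨fun g => ∑ j ∈ Finset.range (κ g), d (s g + j • e), ?_⟩
  intro g
  beta_reduce
  have hse : s (g + e) = s g := by
    have hq : (QuotientAddGroup.mk (s := H) (g + e)) = QuotientAddGroup.mk (s := H) g := by
      apply QuotientAddGroup.eq.mpr
      have : -(g + e) + g = (-1 : ℤ) • e := by simp
      rw [this]
      exact AddSubgroup.zsmul_mem H (AddSubgroup.mem_zmultiples e) _
    exact congrArg Quotient.out hq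
  have hg1 : g + e = s g + (κ g + 1) • e := by
    rw [succ_nsmul]
    nth_rewrite 1 [hκg g]
    abel
  by_cases hlt : κ g + 1 < m
  · have hκge : κ (g + e) = κ g + 1 := by
      have hx : s (g + e) + κ (g + e) • e = s g + (κ g + 1) • e := by
        rw [← hκg (g + e)]; exact hg1
      rw [hse] at hx
      exact uniq _ _ _ (hκlt _) hlt hx
    rw [hκge, hse, Finset.sum_range_succ]
    have hgg : s g + κ g • e = g := (hκg g).symm
    rw [hgg]
    abel
  · have hm1 : κ g + 1 = m := by have := hκlt g; omega
    have hge : g + e = s g := by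
      rw [hg1, hm1]
      have : (m : ℕ) • e = 0 := by
        have := (horder m).mpr dvd_rfl
        simpa [natCast_zsmul] using this
      rw [this, add_zero]
    have hκ0 : κ (g + e) = 0 := by
      have hx : s (g + e) + κ (g + e) • e = s g + (0 : ℕ) • e := by
        rw [← hκg (g + e), hge]; simp
      rw [hse] at hx
      exact uniq _ _ _ (hκlt _) hm hx
    have hbg : ∑ j ∈ Finset.range (κ g), d (s g + j • e) = - d g := by
      have hL := hline (s g)
      rw [show m = κ g + 1 from hm1.symm, Finset.sum_range_succ] at hL
      have hgg : s g + κ g • e = g := (hκg g).symm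
      rw [hgg] at hL
      exact eq_neg_of_add_eq_zero_left hL
    rw [hκ0, hse, hbg]
    simp

lemma grid_solve {A : Type} [AddCommGroup A] :
    ∀ (n : ℕ) (G : Type) [AddCommGroup G], ∀ (e : Fin n → G) (m : Fin n → ℕ),
      (∀ i, 1 ≤ m i) →
      (∀ k : Fin n → ℤ, (∑ i, k i • e i) = 0 ↔ ∀ i, (m i : ℤ) ∣ k i) →
      ∀ (d : Fin n → G → A),
        (∀ i g, ∑ k ∈ Finset.range (m i), d i (g + k • e i) = 0) →
        (∀ i j g, d i (g + e j) - d i g = d j (g + e i) - d j g) →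
        ∃ b : G → A, ∀ i g, d i g = b (g + e i) - b g := by
  intro n
  induction n with
  | zero =>
    intro G _ e m _ _ d _ _
    exact ⟨0, fun i => i.elim0⟩
  | succ n IH =>
    intro G _ e m hm hindep d hline hcurl
    set i₀ : Fin (n + 1) := Fin.last n with hi₀
    have horder : ∀ (i : Fin (n + 1)) (t : ℤ), t • e i = 0 ↔ (m i : ℤ) ∣ t := by
      intro i t
      have hsum : (∑ j, (Pi.single i t : Fin (n+1) → ℤ) j • e j) = t • e i := by
        rw [Finset.sum_eq_single i]
        · simp
        · intro j _ hj; simp [Pi.single_eq_of_ne hj]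
        · simp
      have h := hindep (Pi.single i t : Fin (n+1) → ℤ)
      rw [hsum] at h
      constructor
      · intro ht
        have := h.mp ht i
        simpa using this
      · intro ht
        apply h.mpr
        intro j
        by_cases hji : j = i
        · subst hji; simpa using ht
        · simp [Pi.single_eq_of_ne hji]
    have hme : ∀ i : Fin (n + 1), (m i) • e i = 0 := by
      intro i
      have := (horder i (m i)).mpr dvd_rfl
      simpa [natCast_zsmul] using this
    obtain ⟨b₀, hb₀⟩ := cyclic_solve (e i₀) (m i₀) (hm i₀) (horder i₀) (d i₀) (hline i₀)
    set d' : Fin (n + 1) → G → A := fun i g => d i g - (b₀ (g + e i) - b₀ g) with hd'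
    have hd'last : ∀ g, d' i₀ g = 0 := by
      intro g
      simp only [d', ← hb₀ g]
      abel
    have hline' : ∀ i g, ∑ k ∈ Finset.range (m i), d' i (g + k • e i) = 0 := by
      intro i g
      have tel : ∑ k ∈ Finset.range (m i), (b₀ (g + k • e i + e i) - b₀ (g + k • e i))
          = b₀ (g + (m i) • e i) - b₀ (g + 0 • e i) := by
        have h := Finset.sum_range_sub (fun k => b₀ (g + k • e i)) (m i)
        simp only [succ_nsmul] at h
        convert h using 2 with k
        · rw [add_assoc]
      rw [Finset.sum_sub_distrib] at tel
      simp only [d', Finset.sum_sub_distrib]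
      rw [hline i g, tel, hme i]
      simp
    have hcurl' : ∀ i j g, d' i (g + e j) - d' i g = d' j (g + e i) - d' j g := by
      intro i j g
      have e1 : d' i (g + e j) - d' i g = (d i (g + e j) - d i g)
          - ((b₀ (g + e i + e j) - b₀ (g + e j)) - (b₀ (g + e i) - b₀ g)) := by
        simp only [d']
        rw [show g + e j + e i = g + e i + e j from by abel]
        abel
      have e2 : d' j (g + e i) - d' j g = (d j (g + e i) - d j g)
          - ((b₀ (g + e i + e j) - b₀ (g + e i)) - (b₀ (g + e j) - b₀ g)) := by
        simp only [d']
        abel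
      rw [e1, e2, hcurl i j g]
      abel
    have hinv : ∀ (i : Fin (n + 1)) (g : G), d' i (g + e i₀) = d' i g := by
      intro i g
      have h := hcurl' i i₀ g
      rw [hd'last, hd'last, sub_self] at h
      exact sub_eq_zero.mp h
    have hinvz : ∀ (i : Fin (n + 1)) (g : G) (t : ℤ), d' i (g + t • e i₀) = d' i g := by
      intro i g t
      induction t using Int.induction_on with
      | zero => simp
      | succ k ih =>
        rw [show g + ((k : ℤ) + 1) • e i₀ = (g + (k : ℤ) • e i₀) + e i₀ from by
          rw [add_zsmul, one_zsmul]; abel]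
        rw [hinv, ih]
      | pred k ih =>
        have h := hinv i (g + (-(k : ℤ) - 1) • e i₀)
        rw [show g + (-(k : ℤ) - 1) • e i₀ + e i₀ = g + (-(k : ℤ)) • e i₀ from by
          rw [sub_zsmul, one_zsmul]; abel] at h
        rw [← h]
        exact ih
    set H := AddSubgroup.zmultiples (e i₀) with hHdef
    let π : G →+ G ⧸ H := QuotientAddGroup.mk' H
    have hπsurj : Function.Surjective π := QuotientAddGroup.mk'_surjective H
    have hd'inv : ∀ (i : Fin (n + 1)) (a b : G),
        (QuotientAddGroup.leftRel H) a b → d' i a = d' i b := by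
      intro i a b hab
      rw [QuotientAddGroup.leftRel_apply] at hab
      obtain ⟨t, ht⟩ := AddSubgroup.mem_zmultiples_iff.mp hab
      have hb : b = a + t • e i₀ := by rw [ht]; abel
      rw [hb, hinvz]
    let e' : Fin n → G ⧸ H := fun i => π (e i.castSucc)
    let m' : Fin n → ℕ := fun i => m i.castSucc
    let d'' : Fin n → G ⧸ H → A := fun i q =>
      Quotient.liftOn' q (d' i.castSucc) (hd'inv i.castSucc)
    have hd''π : ∀ (i : Fin n) (g : G), d'' i (π g) = d' i.castSucc g := fun i g => rfl
    have hπe₀ : π (e i₀) = 0 := (QuotientAddGroup.eq_zero_iff _).mpr (AddSubgroup.mem_zmultiples _)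
    have hindep' : ∀ k : Fin n → ℤ, (∑ i, k i • e' i) = 0 ↔ ∀ i, (m' i : ℤ) ∣ k i := by
      intro k
      have hπs : (∑ i, k i • e' i) = π (∑ i, k i • e i.castSucc) := by
        rw [map_sum]
        exact Finset.sum_congr rfl fun i _ => (map_zsmul π _ _).symm
      rw [hπs]
      constructor
      · intro h0 i
        have hmem : (∑ i, k i • e i.castSucc) ∈ H := (QuotientAddGroup.eq_zero_iff _).mp h0
        obtain ⟨t, ht⟩ := AddSubgroup.mem_zmultiples_iff.mp hmem
        have hzero : (∑ j : Fin (n + 1), (Fin.snoc k (-t) : Fin (n+1) → ℤ) j • e j) = 0 := by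
          rw [Fin.sum_univ_castSucc]
          have hc : ∀ j : Fin n, ((Fin.snoc k (-t) : Fin (n+1) → ℤ) (Fin.castSucc j) : ℤ) • e j.castSucc
              = k j • e j.castSucc := by intro j; rw [Fin.snoc_castSucc]
          rw [Finset.sum_congr rfl fun j _ => hc j]
          have hl : ((Fin.snoc k (-t) : Fin (n+1) → ℤ) (Fin.last n) : ℤ) • e (Fin.last n) = (-t) • e i₀ := by
            rw [Fin.snoc_last, hi₀]
          rw [hl, ← ht]
          simp
        have := (hindep _).mp hzero i.castSucc
        rwa [Fin.snoc_castSucc] at this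
      · intro hdvd
        have hall : ∀ j, (m j : ℤ) ∣ (Fin.snoc k 0 : Fin (n+1) → ℤ) j := by
          intro j
          induction j using Fin.lastCases with
          | last => rw [Fin.snoc_last]; exact dvd_zero _
          | cast i => rw [Fin.snoc_castSucc]; exact hdvd i
        have h0 := (hindep _).mpr hall
        rw [Fin.sum_univ_castSucc] at h0
        have hc : ∀ j : Fin n, ((Fin.snoc k 0 : Fin (n+1) → ℤ) (Fin.castSucc j) : ℤ) • e j.castSucc
            = k j • e j.castSucc := by intro j; rw [Fin.snoc_castSucc]
        rw [Finset.sum_congr rfl fun j _ => hc j, Fin.snoc_last, zero_zsmul, add_zero] at h0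
        rw [h0, map_zero]
    have hline'' : ∀ i q, ∑ k ∈ Finset.range (m' i), d'' i (q + k • e' i) = 0 := by
      intro i q
      obtain ⟨g, rfl⟩ := hπsurj q
      have hterm : ∀ k : ℕ, π g + k • e' i = π (g + k • e i.castSucc) := by
        intro k
        rw [map_add, map_nsmul]
      rw [Finset.sum_congr rfl fun k _ => by rw [hterm k, hd''π]]
      exact hline' i.castSucc g
    have hcurl'' : ∀ i j q, d'' i (q + e' j) - d'' i q = d'' j (q + e' i) - d'' j q := by
      intro i j q
      obtain ⟨g, rfl⟩ := hπsurj q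
      have h1 : π g + e' j = π (g + e j.castSucc) := by rw [map_add]
      have h2 : π g + e' i = π (g + e i.castSucc) := by rw [map_add]
      rw [h1, h2, hd''π, hd''π, hd''π, hd''π]
      exact hcurl' i.castSucc j.castSucc g
    obtain ⟨b1, hb1⟩ := IH (G ⧸ H) e' m' (fun i => hm i.castSucc) hindep' d'' hline'' hcurl''
    refine ⟨fun g => b1 (π g) + b₀ g, ?_⟩
    intro i g
    beta_reduce
    have key : d' i g = b1 (π (g + e i)) - b1 (π g) := by
      induction i using Fin.lastCases with
      | last =>
        rw [← hi₀, hd'last]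
        have : π (g + e i₀) = π g := by rw [map_add, hπe₀, add_zero]
        rw [this, sub_self]
      | cast j =>
        have h := hb1 j (π g)
        have hq : π g + e' j = π (g + e j.castSucc) := by rw [map_add]
        rw [hq, hd''π] at h
        exact h
    have hdd : d i g = d' i g + (b₀ (g + e i) - b₀ g) := by simp [d']
    rw [hdd, key]
    abel

/- ### ℚ/ℤ and coefficientwise integrality -/

abbrev Aq : Type := ℚ ⧸ AddSubgroup.zmultiples (1 : ℚ)

noncomputable def piq : ℚ →+ Aq := QuotientAddGroup.mk' _

lemma piq_eq_zero_iff (q : ℚ) : piq q = 0 ↔ ∃ z : ℤ, (z : ℚ) = q := by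
  rw [piq, QuotientAddGroup.mk'_apply, QuotientAddGroup.eq_zero_iff]
  simp [AddSubgroup.mem_zmultiples_iff, zsmul_eq_mul]

lemma piq_intCast (z : ℤ) : piq (z : ℚ) = 0 := (piq_eq_zero_iff _).mpr ⟨z, rfl⟩

lemma piq_out (q : Aq) : piq q.out = q := Quotient.out_eq' q

lemma toQ_apply {G : Type} [CommGroup G] (z : ZG G) (g : G) : (toQ G z).coeff g = (z.coeff g : ℚ) := by
  induction z using MonoidAlgebra.induction_linear with
  | zero => simp
  | add f h hf hh =>
    rw [map_add]
    rw [MonoidAlgebra.coeff_add, Finsupp.add_apply, hf, hh]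
    rw [MonoidAlgebra.coeff_add, Finsupp.add_apply]
    push_cast
    ring
  | single a b =>
    classical
    show ((MonoidAlgebra.lift ℤ (QG G) G (MonoidAlgebra.of ℚ G)) (MonoidAlgebra.single a b)).coeff g = _
    rw [MonoidAlgebra.lift_single]
    rw [MonoidAlgebra.of_apply]
    show (b • MonoidAlgebra.single a (1:ℚ)).coeff g = ((Finsupp.single a b) g : ℚ)
    rw [MonoidAlgebra.coeff_smul_apply, MonoidAlgebra.coeff_single]
    rw [Finsupp.single_apply, Finsupp.single_apply]
    split_ifs <;> simp

lemma memZG_iff {G : Type} [CommGroup G] (x : QG G) :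
    MemZG G x ↔ ∀ g, ∃ z : ℤ, (z : ℚ) = x.coeff g := by
  constructor
  · rintro ⟨z, rfl⟩ g
    exact ⟨z.coeff g, (toQ_apply z g).symm⟩
  · intro h
    refine ⟨MonoidAlgebra.ofCoeff (Finsupp.mapRange (fun q => ⌊q⌋) (by simp) x.coeff), ?_⟩
    apply MonoidAlgebra.ext
    apply Finsupp.ext
    intro g
    rw [toQ_apply]
    show ((Finsupp.mapRange (fun q => ⌊q⌋) (by simp) x.coeff) g : ℚ) = x.coeff g
    rw [Finsupp.mapRange_apply]
    obtain ⟨z, hz⟩ := h g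
    rw [← hz, Int.floor_intCast]

/- ### The main theorem -/

/-- Lemma 2.3 (solution): if r₁, …, rₙ ∈ ℚ[G] satisfy rᵢPᵢ ∈ ℤ[G] for all i and
rᵢ(e − pⱼ) − rⱼ(e − pᵢ) ∈ ℤ[G] for all i, j, then there is x ∈ ℚ[G] with
rᵢ − x(e − pᵢ) ∈ ℤ[G] for all i. -/
theorem statement6
    (n : ℕ) (hn : 1 ≤ n) (m : Fin n → ℕ) [∀ i, NeZero (m i)]
    (r : Fin n → QG (Gr m))
    (h1 : ∀ i, MemZG (Gr m) (r i * toQ (Gr m) (Pel m i)))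
    (h2 : ∀ i j, MemZG (Gr m)
      (r i * (1 - MonoidAlgebra.of ℚ (Gr m) (pgen m j))
        - r j * (1 - MonoidAlgebra.of ℚ (Gr m) (pgen m i)))) :
    ∃ x : QG (Gr m), ∀ i,
      MemZG (Gr m) (r i - x * (1 - MonoidAlgebra.of ℚ (Gr m) (pgen m i))) := by
  classical
  have hm1 : ∀ i, 1 ≤ m i := fun i => Nat.one_le_iff_ne_zero.mpr (NeZero.ne (m i))
  -- coefficient of a product with P i
  have hPcoeff : ∀ (i : Fin n) (s : QG (Gr m)) (w : Gr m),
      (s * toQ (Gr m) (Pel m i)).coeff w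
        = ∑ k ∈ Finset.range (m i), s.coeff (w * (pgen m i ^ k)⁻¹) := by
    intro i s w
    have hP : toQ (Gr m) (Pel m i)
        = ∑ k ∈ Finset.range (m i), MonoidAlgebra.single (pgen m i ^ k) (1 : ℚ) := by
      rw [Pel, map_sum]
      refine Finset.sum_congr rfl fun k _ => ?_
      rw [← map_pow (MonoidAlgebra.of ℤ (Gr m)) (pgen m i) k]
      show (MonoidAlgebra.lift ℤ (QG (Gr m)) (Gr m) (MonoidAlgebra.of ℚ (Gr m)))
        (MonoidAlgebra.single (pgen m i ^ k) 1) = _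
      rw [MonoidAlgebra.lift_single, one_smul, MonoidAlgebra.of_apply]
    rw [hP, Finset.mul_sum, MonoidAlgebra.coeff_sum, Finsupp.finset_sum_apply]
    exact Finset.sum_congr rfl fun k _ => by rw [MonoidAlgebra.coeff_mul_single_apply, mul_one]
  -- coefficient of a product with (1 - p a)
  have hsub : ∀ (s : QG (Gr m)) (a : Fin n) (u : Gr m),
      (s * (1 - MonoidAlgebra.of ℚ (Gr m) (pgen m a))).coeff u = s.coeff u - s.coeff (u * (pgen m a)⁻¹) := by
    intro s a u
    rw [mul_sub, mul_one, MonoidAlgebra.coeff_sub, Finsupp.sub_apply, MonoidAlgebra.of_apply,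
      MonoidAlgebra.coeff_mul_single_apply, mul_one]
  -- positive-power form of h1
  have h1' : ∀ (i : Fin n) (w : Gr m), ∃ z : ℤ,
      (z : ℚ) = ∑ k ∈ Finset.range (m i), (r i).coeff (w * pgen m i ^ k) := by
    intro i w
    obtain ⟨z, hz⟩ := (memZG_iff _).mp (h1 i) (w * pgen m i ^ (m i - 1))
    refine ⟨z, ?_⟩
    rw [hz, hPcoeff]
    rw [← Finset.sum_range_reflect (fun k => (r i).coeff (w * pgen m i ^ k)) (m i)]
    refine Finset.sum_congr rfl fun k hk => ?_
    rw [Finset.mem_range] at hk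
    congr 1
    rw [mul_inv_eq_iff_eq_mul, mul_assoc, ← pow_add]
    congr 2
    omega
  -- coefficient form of h2
  have h2' : ∀ (i j : Fin n) (u : Gr m), ∃ z : ℤ,
      (z : ℚ) = (r i).coeff u - (r i).coeff (u * (pgen m j)⁻¹) - (r j).coeff u + (r j).coeff (u * (pgen m i)⁻¹) := by
    intro i j u
    obtain ⟨z, hz⟩ := (memZG_iff _).mp (h2 i j) u
    refine ⟨z, ?_⟩
    rw [hz, MonoidAlgebra.coeff_sub, Finsupp.sub_apply, hsub, hsub]
    ring
  -- set up the grid data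
  let e : Fin n → Additive (Gr m) := fun i => Additive.ofMul (pgen m i)
  let d : Fin n → Additive (Gr m) → Aq := fun i g => piq ((r i).coeff (g.toMul * pgen m i))
  have hindep : ∀ k : Fin n → ℤ, (∑ i, k i • e i) = 0 ↔ ∀ i, (m i : ℤ) ∣ k i := by
    intro k
    have hφ : ∀ (j : Fin n), ∃ φ : Additive (Gr m) →+ ZMod (m j),
        ∀ g : Additive (Gr m), φ g = (g.toMul j).toAdd := by
      intro j
      exact ⟨AddMonoidHom.mk' (fun g => (g.toMul j).toAdd) (fun a b => rfl), fun g => rfl⟩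
    have hterm : ∀ (j : Fin n) (φ : Additive (Gr m) →+ ZMod (m j)),
        (∀ g : Additive (Gr m), φ g = (g.toMul j).toAdd) →
        ∀ i, φ (k i • e i) = if i = j then (k j : ZMod (m j)) else 0 := by
      intro j φ hφj i
      rw [map_zsmul, hφj]
      by_cases hij : i = j
      · subst hij
        rw [if_pos rfl]
        have hval : ((e i).toMul i).toAdd = (1 : ZMod (m i)) := by
          show ((pgen m i) i).toAdd = _
          rw [pgen, Pi.mulSingle_eq_same]
          rfl
        rw [hval, zsmul_eq_mul, mul_one]
      · rw [if_neg hij]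
        have hval : ((e i).toMul j).toAdd = (0 : ZMod (m j)) := by
          show ((pgen m i) j).toAdd = _
          rw [pgen, Pi.mulSingle_eq_of_ne (Ne.symm hij)]
          rfl
        rw [hval, smul_zero]
    have hsum : ∀ (j : Fin n) (φ : Additive (Gr m) →+ ZMod (m j)),
        (∀ g : Additive (Gr m), φ g = (g.toMul j).toAdd) →
        φ (∑ i, k i • e i) = (k j : ZMod (m j)) := by
      intro j φ hφj
      rw [map_sum, Finset.sum_congr rfl fun i _ => hterm j φ hφj i, Finset.sum_ite_eq']
      simp
    constructor
    · intro h0 j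
      obtain ⟨φ, hφj⟩ := hφ j
      have := hsum j φ hφj
      rw [h0, map_zero] at this
      exact (ZMod.intCast_zmod_eq_zero_iff_dvd _ _).mp this.symm
    · intro hdvd
      have hcomp : ∀ j : Fin n, ((∑ i, k i • e i).toMul) j = 1 := by
        intro j
        obtain ⟨φ, hφj⟩ := hφ j
        have h := hsum j φ hφj
        rw [hφj] at h
        have hzero : (k j : ZMod (m j)) = 0 := (ZMod.intCast_zmod_eq_zero_iff_dvd _ _).mpr (hdvd j)
        rw [hzero] at h
        have : ((∑ i, k i • e i).toMul j).toAdd = (0 : ZMod (m j)) := h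
        calc ((∑ i, k i • e i).toMul) j
            = Multiplicative.ofAdd (((∑ i, k i • e i).toMul j).toAdd) := rfl
          _ = Multiplicative.ofAdd (0 : ZMod (m j)) := by rw [this]
          _ = 1 := rfl
      have : ((∑ i, k i • e i).toMul) = 1 := funext hcomp
      have h2 : Additive.toMul (∑ i, k i • e i) = Additive.toMul (0 : Additive (Gr m)) := this
      exact Additive.toMul.injective h2
  have hline : ∀ i g, ∑ k ∈ Finset.range (m i), d i (g + k • e i) = 0 := by
    intro i g
    have hterm : ∀ k : ℕ, d i (g + k • e i) = piq ((r i).coeff ((g.toMul * pgen m i) * pgen m i ^ k)) := by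
      intro k
      show piq ((r i).coeff ((g + k • e i).toMul * pgen m i)) = _
      congr 2
      rw [toMul_add, toMul_nsmul]
      show g.toMul * (pgen m i) ^ k * pgen m i = g.toMul * pgen m i * pgen m i ^ k
      rw [mul_right_comm]
    rw [Finset.sum_congr rfl fun k _ => hterm k, ← map_sum]
    obtain ⟨z, hz⟩ := h1' i (g.toMul * pgen m i)
    rw [← hz]
    exact piq_intCast z
  have hcurl : ∀ i j g, d i (g + e j) - d i g = d j (g + e i) - d j g := by
    intro i j g
    set u := g.toMul * pgen m i * pgen m j with hu
    obtain ⟨z, hz⟩ := h2' i j u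
    have hA : u * (pgen m j)⁻¹ = g.toMul * pgen m i := by
      rw [hu, mul_inv_cancel_right]
    have hB : u * (pgen m i)⁻¹ = g.toMul * pgen m j := by
      rw [hu, show g.toMul * pgen m i * pgen m j = g.toMul * pgen m j * pgen m i from
        mul_right_comm _ _ _, mul_inv_cancel_right]
    rw [hA, hB] at hz
    have hd1 : d i (g + e j) = piq ((r i).coeff u) := by
      show piq ((r i).coeff ((g + e j).toMul * pgen m i)) = _
      congr 2
      rw [toMul_add]
      show g.toMul * pgen m j * pgen m i = u
      rw [hu, mul_right_comm]
    have hd2 : d j (g + e i) = piq ((r j).coeff u) := by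
      show piq ((r j).coeff ((g + e i).toMul * pgen m j)) = _
      congr 2
    have hd3 : d i g = piq ((r i).coeff (g.toMul * pgen m i)) := rfl
    have hd4 : d j g = piq ((r j).coeff (g.toMul * pgen m j)) := rfl
    rw [hd1, hd2, hd3, hd4]
    have h0 : piq ((r i).coeff u - (r i).coeff (g.toMul * pgen m i) - (r j).coeff u + (r j).coeff (g.toMul * pgen m j)) = 0 := by
      rw [← hz]
      exact piq_intCast z
    rw [← sub_eq_zero]
    calc piq ((r i).coeff u) - piq ((r i).coeff (g.toMul * pgen m i))
          - (piq ((r j).coeff u) - piq ((r j).coeff (g.toMul * pgen m j)))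
        = piq ((r i).coeff u - (r i).coeff (g.toMul * pgen m i) - (r j).coeff u + (r j).coeff (g.toMul * pgen m j)) := by
          rw [map_add, map_sub, map_sub]
          abel
      _ = 0 := h0
  obtain ⟨b, hb⟩ := grid_solve n (Additive (Gr m)) e m hm1 hindep d hline hcurl
  let xf : Gr m → ℚ := fun h => (b (Additive.ofMul h)).out
  let x : QG (Gr m) := MonoidAlgebra.ofCoeff (Finsupp.equivFunOnFinite.symm xf)
  have hxw : ∀ h : Gr m, x.coeff h = xf h := fun h => rfl
  have hxf : ∀ h, piq (xf h) = b (Additive.ofMul h) := fun h => piq_out _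
  refine ⟨x, fun i => ?_⟩
  rw [memZG_iff]
  intro w
  have hcoeff : (r i - x * (1 - MonoidAlgebra.of ℚ (Gr m) (pgen m i))).coeff w
      = (r i).coeff w - (xf w - xf (w * (pgen m i)⁻¹)) := by
    rw [MonoidAlgebra.coeff_sub, Finsupp.sub_apply, hsub x i w, hxw, hxw]
  apply (piq_eq_zero_iff _).mp
  rw [hcoeff]
  have hdw : d i (Additive.ofMul (w * (pgen m i)⁻¹)) = piq ((r i).coeff w) := by
    show piq ((r i).coeff ((Additive.ofMul (w * (pgen m i)⁻¹)).toMul * pgen m i)) = _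
    congr 2
    rw [toMul_ofMul, inv_mul_cancel_right]
  have hadd : Additive.ofMul (w * (pgen m i)⁻¹) + e i = Additive.ofMul w := by
    show Additive.ofMul (w * (pgen m i)⁻¹) + Additive.ofMul (pgen m i) = Additive.ofMul w
    rw [← ofMul_mul, inv_mul_cancel_right]
  have hbb := hb i (Additive.ofMul (w * (pgen m i)⁻¹))
  rw [hdw, hadd] at hbb
  rw [map_sub, hbb, map_sub, hxf, hxf]
  abel
end

section
/- Let k ≠ l be indices in {1, …, n} and let d = gcd(m_k, m_l). Define α, β : {p_1, …, p_n} → ℚ[G] by α(p_k) = Σ_{j=0}^{m_l−1} (j/d) p_l^j Q_l and α(p_i) = 0 for i ≠ k, and β(p_l) = Σ_{j=0}^{m_k−1} −(j/d) p_k^j Q_k and β(p_i) = 0 for i ≠ l. Then: (1) α(p_i)(e − p_j) + β(p_j)(e − p_i) ∈ ℤ[G] for all i, j, and in fact this expression equals (m_k/d)Q_k − (m_l/d)Q_l when (i,j) = (k,l) and equals 0 otherwise; (2) (α(p_k) + β(p_k))(e − p_l) = (1/d)N − (m_l/d)Q_l, so (α(p_k) + β(p_k))(e − p_l) − (1/d)N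 ∈ ℤ[G]; and (3) (α(p_i) + β(p_i))(e − p_j) = 0 whenever {i,j} ≠ {k,l}. -/
open MonoidAlgebra Finset

-- helpers
lemma toQ_of {G : Type} [CommGroup G] (g : G) :
    toQ G (MonoidAlgebra.of ℤ G g) = MonoidAlgebra.of ℚ G g :=
  MonoidAlgebra.lift_of _ _

lemma pgen_pow_order {n : ℕ} (m : Fin n → ℕ) (i : Fin n) :
    pgen m i ^ (m i) = 1 := by
  unfold pgen
  rw [← Pi.mulSingle_pow]
  have : (Multiplicative.ofAdd (1 : ZMod (m i))) ^ (m i) = 1 := by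
    rw [← ofAdd_nsmul]
    simp [nsmul_eq_mul, ZMod.natCast_self]
  rw [this, Pi.mulSingle_one]

lemma toQ_Pel {n : ℕ} (m : Fin n → ℕ) (i : Fin n) :
    toQ (Gr m) (Pel m i)
      = ∑ kk ∈ Finset.range (m i), (MonoidAlgebra.of ℚ (Gr m) (pgen m i)) ^ kk := by
  unfold Pel
  rw [map_sum]
  exact Finset.sum_congr rfl fun kk _ => by rw [map_pow, toQ_of]

lemma Pel_mul_geom {n : ℕ} (m : Fin n → ℕ) (i : Fin n) :
    toQ (Gr m) (Pel m i) * (1 - MonoidAlgebra.of ℚ (Gr m) (pgen m i)) = 0 := by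
  rw [toQ_Pel]
  have := geom_sum_mul (MonoidAlgebra.of ℚ (Gr m) (pgen m i)) (m i)
  have hx : (MonoidAlgebra.of ℚ (Gr m) (pgen m i)) ^ (m i) = 1 := by
    rw [← map_pow, pgen_pow_order, map_one]
  rw [hx] at this
  calc _ = -((∑ kk ∈ Finset.range (m i), (MonoidAlgebra.of ℚ (Gr m) (pgen m i)) ^ kk) *
        ((MonoidAlgebra.of ℚ (Gr m) (pgen m i)) - 1)) := by ring
    _ = 0 := by rw [this]; ring

lemma Qel_mul_zero {n : ℕ} (m : Fin n → ℕ) {i j : Fin n} (hij : i ≠ j) :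
    toQ (Gr m) (Qel m j) * (1 - MonoidAlgebra.of ℚ (Gr m) (pgen m i)) = 0 := by
  have hi : i ∈ Finset.univ.erase j := by simp [hij]
  have : Qel m j = Pel m i * ∏ x ∈ (Finset.univ.erase j).erase i, Pel m x :=
    (Finset.mul_prod_erase _ _ hi).symm
  rw [this, map_mul, mul_comm (toQ (Gr m) (Pel m i)) _, mul_assoc, Pel_mul_geom, mul_zero]

lemma sum_range_zmod {M : ℕ} [NeZero M] {A : Type} [AddCommMonoid A] (f : ZMod M → A) :
    ∑ kk ∈ Finset.range M, f (kk : ZMod M) = ∑ a : ZMod M, f a := by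
  refine Finset.sum_nbij' (fun kk => (kk : ZMod M)) (fun a => a.val) ?_ ?_ ?_ ?_ ?_
  · intro a _; exact Finset.mem_univ _
  · intro a _; exact Finset.mem_range.2 (ZMod.val_lt a)
  · intro a ha; exact ZMod.val_cast_of_lt (Finset.mem_range.1 ha)
  · intro a _; exact ZMod.natCast_rightInverse a
  · intro a _; rfl

lemma pgen_pow_cast {n : ℕ} (m : Fin n → ℕ) (i : Fin n) (kk : ℕ) :
    pgen m i ^ kk = Pi.mulSingle i (Multiplicative.ofAdd (kk : ZMod (m i))) := by
  unfold pgen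
  rw [← Pi.mulSingle_pow, ← ofAdd_nsmul]
  simp [nsmul_eq_mul]

lemma prod_Pel {n : ℕ} (m : Fin n → ℕ) [∀ i, NeZero (m i)] :
    ∏ i, Pel m i = Nel m := by
  have h1 : ∀ i, Pel m i
      = ∑ a : ZMod (m i), MonoidAlgebra.of ℤ (Gr m) (Pi.mulSingle i (Multiplicative.ofAdd a)) := by
    intro i
    unfold Pel
    rw [← sum_range_zmod fun a => MonoidAlgebra.of ℤ (Gr m) (Pi.mulSingle i (Multiplicative.ofAdd a))]
    refine Finset.sum_congr rfl fun kk _ => ?_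
    rw [← map_pow, pgen_pow_cast]
  simp_rw [h1]
  rw [Finset.prod_univ_sum, Fintype.piFinset_univ]
  unfold Nel
  apply Fintype.sum_equiv (Equiv.piCongrRight fun i => Multiplicative.ofAdd)
  intro x
  rw [← map_prod]
  congr 1
  exact Finset.univ_prod_mulSingle _

lemma Pel_mul_Qel {n : ℕ} (m : Fin n → ℕ) [∀ i, NeZero (m i)] (i : Fin n) :
    Pel m i * Qel m i = Nel m := by
  rw [← prod_Pel m]
  exact Finset.mul_prod_erase _ _ (Finset.mem_univ i)

lemma telescope' {A : Type} [CommRing A] (x : A) (M : ℕ) :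
    (∑ jj ∈ Finset.range M, (jj : A) * x ^ jj) * (1 - x)
      = (∑ jj ∈ Finset.range M, x ^ jj) - 1 - ((M : A) - 1) * x ^ M := by
  induction M with
  | zero => simp
  | succ M ih =>
    rw [Finset.sum_range_succ, Finset.sum_range_succ, add_mul, ih]
    push_cast
    ring

lemma main_calc {A : Type} [CommRing A] (x Q S NN : A) (M : ℕ) (e : A)
    (hx : x ^ M = 1) (hS : S = ∑ jj ∈ Finset.range M, x ^ jj) (hN : S * Q = NN) :
    (∑ jj ∈ Finset.range M, (jj : A) * e * (x ^ jj * Q)) * (1 - x)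
      = e * NN - (M : A) * e * Q := by
  have hsum : ∑ jj ∈ Finset.range M, (jj : A) * e * (x ^ jj * Q)
      = (∑ jj ∈ Finset.range M, (jj : A) * x ^ jj) * (e * Q) := by
    rw [Finset.sum_mul]
    exact Finset.sum_congr rfl fun _ _ => by ring
  have htel := telescope' x M
  rw [hx, ← hS] at htel
  rw [hsum, ← hN]
  linear_combination (e * Q) * htel

lemma alpha_mul {n : ℕ} (m : Fin n → ℕ) [∀ i, NeZero (m i)] (l : Fin n) (d : ℚ) :
    (∑ jj ∈ Finset.range (m l), ((jj : ℚ) / d) •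
        ((MonoidAlgebra.of ℚ (Gr m) (pgen m l)) ^ jj * toQ (Gr m) (Qel m l)))
      * (1 - MonoidAlgebra.of ℚ (Gr m) (pgen m l))
    = ((1:ℚ)/d) • toQ (Gr m) (Nel m) - ((m l : ℚ)/d) • toQ (Gr m) (Qel m l) := by
  set A := QG (Gr m)
  set x : A := MonoidAlgebra.of ℚ (Gr m) (pgen m l) with hxdef
  set Q : A := toQ (Gr m) (Qel m l) with hQdef
  set e : A := algebraMap ℚ A ((1:ℚ)/d) with hedef
  have hx : x ^ (m l) = 1 := by rw [hxdef, ← map_pow, pgen_pow_order, map_one]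
  have hN : (∑ jj ∈ Finset.range (m l), x ^ jj) * Q = toQ (Gr m) (Nel m) := by
    rw [hxdef, hQdef, ← toQ_Pel, ← map_mul, Pel_mul_Qel]
  have hmain := main_calc x Q _ _ (m l) e hx rfl hN
  have h2 : (∑ jj ∈ Finset.range (m l), ((jj : ℚ) / d) • (x ^ jj * Q))
      = ∑ jj ∈ Finset.range (m l), (jj : A) * e * (x ^ jj * Q) := by
    refine Finset.sum_congr rfl fun jj _ => ?_
    simp only [Algebra.smul_def, div_eq_mul_inv, map_mul, map_natCast, map_one, one_mul, hedef]
  rw [h2, hmain]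
  simp only [Algebra.smul_def, div_eq_mul_inv, map_mul, map_natCast, map_one, one_mul, hedef]
  rfl

lemma alpha_mul_zero {n : ℕ} (m : Fin n → ℕ) {l j : Fin n} (hjl : j ≠ l) (c : ℕ → ℚ) :
    (∑ jj ∈ Finset.range (m l), c jj •
        ((MonoidAlgebra.of ℚ (Gr m) (pgen m l)) ^ jj * toQ (Gr m) (Qel m l)))
      * (1 - MonoidAlgebra.of ℚ (Gr m) (pgen m j)) = 0 := by
  rw [Finset.sum_mul]
  refine Finset.sum_eq_zero fun jj _ => ?_
  rw [smul_mul_assoc, mul_assoc, Qel_mul_zero m hjl, mul_zero, smul_zero]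

lemma toQ_natsmul {G : Type} [CommGroup G] (a : ℕ) (z : ZG G) :
    toQ G ((a : ℤ) • z) = (a : ℚ) • toQ G z := by
  rw [map_zsmul, ← Int.cast_smul_eq_zsmul ℚ, Int.cast_natCast]

lemma neg_sum_smul {A : Type} [AddCommGroup A] [Module ℚ A] (s : Finset ℕ) (c : ℕ → ℚ)
    (f : ℕ → A) : ∑ jj ∈ s, (-(c jj)) • f jj = -∑ jj ∈ s, c jj • f jj := by
  rw [← Finset.sum_neg_distrib]
  exact Finset.sum_congr rfl fun _ _ => by rw [neg_smul]


/-- The explicit element used in the surjectivity lemma: for k ≠ l and d = gcd(mₖ, mₗ), with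
α(pₖ) = Σ_{j<mₗ} (j/d)pₗʲQₗ (and α = 0 elsewhere), β(pₗ) = −Σ_{j<mₖ} (j/d)pₖʲQₖ (and β = 0
elsewhere), one has: (1) α(pᵢ)(e−pⱼ) + β(pⱼ)(e−pᵢ) ∈ ℤ[G] for all i, j, being equal to
(mₖ/d)Qₖ − (mₗ/d)Qₗ when (i,j) = (k,l) and to 0 otherwise; (2) (α(pₖ)+β(pₖ))(e−pₗ)
= (1/d)N − (mₗ/d)Qₗ, so that (α(pₖ)+β(pₖ))(e−pₗ) − (1/d)N ∈ ℤ[G]; and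
(3) (α(pᵢ)+β(pᵢ))(e−pⱼ) = 0 whenever {i,j} ≠ {k,l}. -/
theorem statement11
    (n : ℕ) (hn : 1 ≤ n) (m : Fin n → ℕ) [∀ i, NeZero (m i)]
    (k l : Fin n) (hkl : k ≠ l)
    (d : ℕ) (hd : d = Nat.gcd (m k) (m l))
    (α β : Fin n → QG (Gr m))
    (hα : α = fun i => if i = k then
      ∑ jj ∈ Finset.range (m l),
        ((jj : ℚ) / (d : ℚ)) •
          ((MonoidAlgebra.of ℚ (Gr m) (pgen m l)) ^ jj * toQ (Gr m) (Qel m l))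
      else 0)
    (hβ : β = fun i => if i = l then
      ∑ jj ∈ Finset.range (m k),
        (-((jj : ℚ) / (d : ℚ))) •
          ((MonoidAlgebra.of ℚ (Gr m) (pgen m k)) ^ jj * toQ (Gr m) (Qel m k))
      else 0) :
    (∀ i j,
      MemZG (Gr m)
        (α i * (1 - MonoidAlgebra.of ℚ (Gr m) (pgen m j))
          + β j * (1 - MonoidAlgebra.of ℚ (Gr m) (pgen m i)))
      ∧
      α i * (1 - MonoidAlgebra.of ℚ (Gr m) (pgen m j))
          + β j * (1 - MonoidAlgebra.of ℚ (Gr m) (pgen m i))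
        = if i = k ∧ j = l then
            ((m k : ℚ) / (d : ℚ)) • toQ (Gr m) (Qel m k)
              - ((m l : ℚ) / (d : ℚ)) • toQ (Gr m) (Qel m l)
          else 0)
    ∧
    ((α k + β k) * (1 - MonoidAlgebra.of ℚ (Gr m) (pgen m l))
        = ((1 : ℚ) / (d : ℚ)) • toQ (Gr m) (Nel m)
          - ((m l : ℚ) / (d : ℚ)) • toQ (Gr m) (Qel m l)
      ∧
      MemZG (Gr m)
        ((α k + β k) * (1 - MonoidAlgebra.of ℚ (Gr m) (pgen m l))
          - ((1 : ℚ) / (d : ℚ)) • toQ (Gr m) (Nel m)))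
    ∧
    (∀ i j, ¬((i = k ∧ j = l) ∨ (i = l ∧ j = k)) →
      (α i + β i) * (1 - MonoidAlgebra.of ℚ (Gr m) (pgen m j)) = 0) := by
  have hd0 : (d : ℚ) ≠ 0 := by
    have hk0 : m k ≠ 0 := NeZero.ne (m k)
    have : 0 < d := hd ▸ Nat.gcd_pos_of_pos_left (m l) (Nat.pos_of_ne_zero hk0)
    exact_mod_cast this.ne'
  have hdk : d ∣ m k := hd ▸ Nat.gcd_dvd_left _ _
  have hdl : d ∣ m l := hd ▸ Nat.gcd_dvd_right _ _
  have hcastk : ((m k / d : ℕ) : ℚ) = (m k : ℚ) / d := Nat.cast_div hdk hd0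
  have hcastl : ((m l / d : ℕ) : ℚ) = (m l : ℚ) / d := Nat.cast_div hdl hd0
  -- key values
  have hαk : α k * (1 - MonoidAlgebra.of ℚ (Gr m) (pgen m l))
      = ((1:ℚ)/(d:ℚ)) • toQ (Gr m) (Nel m) - ((m l : ℚ)/(d:ℚ)) • toQ (Gr m) (Qel m l) := by
    simp only [hα, eq_self_iff_true, if_true]; exact alpha_mul m l d
  have hβl : β l * (1 - MonoidAlgebra.of ℚ (Gr m) (pgen m k))
      = ((m k : ℚ)/(d:ℚ)) • toQ (Gr m) (Qel m k) - ((1:ℚ)/(d:ℚ)) • toQ (Gr m) (Nel m) := by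
    simp only [hβ, eq_self_iff_true, if_true]
    rw [neg_sum_smul, neg_mul, alpha_mul m k d]
    abel
  have hαzero : ∀ j : Fin n, j ≠ l → α k * (1 - MonoidAlgebra.of ℚ (Gr m) (pgen m j)) = 0 := by
    intro j hj
    simp only [hα, eq_self_iff_true, if_true]
    exact alpha_mul_zero m hj _
  have hβzero : ∀ i : Fin n, i ≠ k → β l * (1 - MonoidAlgebra.of ℚ (Gr m) (pgen m i)) = 0 := by
    intro i hi
    simp only [hβ, eq_self_iff_true, if_true]
    exact alpha_mul_zero m hi _
  have hαo : ∀ i : Fin n, i ≠ k → α i = 0 := by intro i hi; rw [hα]; simp [hi]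
  have hβo : ∀ j : Fin n, j ≠ l → β j = 0 := by intro j hj; rw [hβ]; simp [hj]
  refine ⟨fun i j => ?_, ⟨?_, ?_⟩, fun i j hne => ?_⟩
  · by_cases hi : i = k <;> by_cases hj : j = l
    · rw [hi, hj]
      have heq : α k * (1 - MonoidAlgebra.of ℚ (Gr m) (pgen m l))
          + β l * (1 - MonoidAlgebra.of ℚ (Gr m) (pgen m k))
          = ((m k : ℚ)/(d:ℚ)) • toQ (Gr m) (Qel m k)
            - ((m l : ℚ)/(d:ℚ)) • toQ (Gr m) (Qel m l) := by
        rw [hαk, hβl]; abel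
      refine ⟨⟨((m k / d : ℕ) : ℤ) • Qel m k - ((m l / d : ℕ) : ℤ) • Qel m l, ?_⟩, ?_⟩
      · rw [map_sub, toQ_natsmul, toQ_natsmul, hcastk, hcastl, heq]
      · rw [heq, if_pos ⟨rfl, rfl⟩]
    · have h1 : α i * (1 - MonoidAlgebra.of ℚ (Gr m) (pgen m j)) = 0 := by
        rw [hi]; exact hαzero j hj
      have h2 : β j = 0 := hβo j hj
      rw [h1, h2, zero_mul, add_zero, if_neg (by tauto)]
      exact ⟨⟨0, map_zero _⟩, rfl⟩
    · have h1 : α i = 0 := hαo i hi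
      have h2 : β j * (1 - MonoidAlgebra.of ℚ (Gr m) (pgen m i)) = 0 := by
        rw [hj]; exact hβzero i hi
      rw [h1, h2, zero_mul, zero_add, if_neg (by tauto)]
      exact ⟨⟨0, map_zero _⟩, rfl⟩
    · rw [hαo i hi, hβo j hj, zero_mul, zero_mul, add_zero, if_neg (by tauto)]
      exact ⟨⟨0, map_zero _⟩, rfl⟩
  · rw [hβo k hkl, add_zero, hαk]
  · rw [hβo k hkl, add_zero, hαk]
    refine ⟨-(((m l / d : ℕ) : ℤ) • Qel m l), ?_⟩
    rw [map_neg, toQ_natsmul, hcastl]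
    abel
  · by_cases hi : i = k
    · have hj : j ≠ l := fun h => hne (Or.inl ⟨hi, h⟩)
      rw [hi, hβo k hkl, add_zero]
      exact hαzero j hj
    · rw [hαo i hi, zero_add]
      by_cases hil : i = l
      · have hj : j ≠ k := fun h => hne (Or.inr ⟨hil, h⟩)
        rw [hil]; exact hβzero j hj
      · rw [hβo i hil, zero_mul]
end
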